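/- Let n and d be natural numbers with d ≥ 1, and let ω be the rotation-invariant (uniform) probability measure on the unit sphere {θ : ‖θ‖ = 1} of the d-dimensional complex Euclidean space (indexed by Fin d). Then for all x, y : Fin n → Fin d, ∫ (∏_{i} θ(x i)) · conj(∏_{i} θ(y i)) dω(θ) = (binomial(n + d − 1, n))⁻¹ · (n!)⁻¹ · |{π ∈ Perm(Fin n) : ∀ i, x(π i) = y(i)}|. (Entrywise, the integral over pure product states of |θ⟩⟨θ|^{⊗n} equals binomial(n+d−1,n)⁻¹ times the orthogonal projector onto the symmetric subspace of (ℂ^d)^{⊗n}, the latter being the average (1/n!)·∑_π of the permutation matrices.) -/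

import Mathlib

open MeasureTheory Finset

namespace SphereAvg

variable {n d : ℕ}


/-- multidegree of a tuple -/
noncomputable def nu (x : Fin n → Fin d) : Fin d →₀ ℕ := ∑ i, Finsupp.single (x i) 1

lemma nu_apply (x : Fin n → Fin d) (j : Fin d) :
    nu x j = (univ.filter fun i => x i = j).card := by
  classical
  simp only [nu, Finsupp.finset_sum_apply, Finsupp.single_apply]
  rw [Finset.card_filter]

lemma exists_perm_iff {x y : Fin n → Fin d} :
    (∃ π : Equiv.Perm (Fin n), ∀ i, x (π i) = y i) ↔ nu x = nu y := by
  classical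
  constructor
  · rintro ⟨π, hπ⟩
    have : y = fun i => x (π i) := by funext i; rw [hπ]
    subst this
    unfold nu
    exact (Equiv.sum_comp π (fun i => Finsupp.single (x i) 1)).symm
  · intro h
    have hcard : ∀ j : Fin d, Fintype.card {i // y i = j} = Fintype.card {i // x i = j} := by
      intro j
      have := congrArg (fun f => f j) h
      simp only [nu_apply] at this
      rw [Fintype.card_subtype, Fintype.card_subtype]
      omega
    have e : ∀ j : Fin d, {i // y i = j} ≃ {i // x i = j} := fun j =>
      Fintype.equivOfCardEq (hcard j)
    refine ⟨Equiv.ofFiberEquiv e, fun i => ?_⟩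
    exact Equiv.ofFiberEquiv_map e i

lemma prod_eq_of_nu_eq {x y : Fin n → Fin d} (h : nu x = nu y) (f : Fin d → ℂ) :
    ∏ i, f (y i) = ∏ i, f (x i) := by
  obtain ⟨π, hπ⟩ := exists_perm_iff.2 h
  calc ∏ i, f (y i) = ∏ i, f (x (π i)) := by simp only [← hπ]
  _ = ∏ i, f (x i) := Equiv.prod_comp π (fun i => f (x i))

lemma prod_X_eq_monomial (x : Fin n → Fin d) :
    (∏ i, (MvPolynomial.X (x i) : MvPolynomial (Fin d) ℝ)) = MvPolynomial.monomial (nu x) 1 := by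
  classical
  unfold nu
  induction (univ : Finset (Fin n)) using Finset.induction with
  | empty => simp [MvPolynomial.monomial_zero']
  | insert _ _ hna ih =>
    rw [Finset.prod_insert hna, Finset.sum_insert hna, ih, MvPolynomial.X,
      MvPolynomial.monomial_mul, one_mul]

lemma card_filter_perm_eq (x z : Fin n → Fin d) (π₀ : Equiv.Perm (Fin n))
    (hπ₀ : ∀ i, x (π₀ i) = z i) :
    (univ.filter fun π : Equiv.Perm (Fin n) => ∀ i, x (π i) = z i).card
      = (univ.filter fun π : Equiv.Perm (Fin n) => ∀ i, x (π i) = x i).card := by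
  classical
  apply Finset.card_bij (fun π _ => π₀.symm.trans π)
  · intro π hπ
    simp only [mem_filter, mem_univ, true_and] at hπ ⊢
    intro i
    simp only [Equiv.trans_apply]
    rw [hπ, ← hπ₀, Equiv.apply_symm_apply]
  · intro a _ b _ hab
    ext j
    have h3 : a j = b j := by simpa using DFunLike.congr_fun hab (π₀ j)
    exact congrArg Fin.val h3
  · intro σ hσ
    simp only [mem_filter, mem_univ, true_and] at hσ
    refine ⟨π₀.trans σ, ?_, by ext i; simp⟩
    simp only [mem_filter, mem_univ, true_and]
    intro i
    simp only [Equiv.trans_apply]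
    rw [hσ, hπ₀]

lemma orbit_stab (x : Fin n → Fin d) :
    (univ.filter fun z : Fin n → Fin d => nu z = nu x).card
      * (univ.filter fun π : Equiv.Perm (Fin n) => ∀ i, x (π i) = x i).card
      = n.factorial := by
  classical
  have h1 : n.factorial = Fintype.card (Equiv.Perm (Fin n)) := by
    rw [Fintype.card_perm, Fintype.card_fin]
  have hmaps : ∀ π ∈ (univ : Finset (Equiv.Perm (Fin n))),
      (fun i => x (π i)) ∈ univ.filter fun z : Fin n → Fin d => nu z = nu x := fun π _ => by
    simp only [mem_filter, mem_univ, true_and]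
    exact (exists_perm_iff.1 ⟨π, fun _ => rfl⟩).symm
  have h2 : ∀ z ∈ (univ.filter fun z : Fin n → Fin d => nu z = nu x),
      (univ.filter fun π : Equiv.Perm (Fin n) => (fun i => x (π i)) = z).card
        = (univ.filter fun π : Equiv.Perm (Fin n) => ∀ i, x (π i) = x i).card := by
    intro z hz
    simp only [mem_filter, mem_univ, true_and] at hz
    obtain ⟨π₀, hπ₀⟩ := exists_perm_iff.2 hz.symm
    have : (univ.filter fun π : Equiv.Perm (Fin n) => (fun i => x (π i)) = z)
        = univ.filter fun π : Equiv.Perm (Fin n) => ∀ i, x (π i) = z i := by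
      apply Finset.filter_congr; intro π _; simp [funext_iff]
    rw [this]
    exact card_filter_perm_eq x z π₀ hπ₀
  rw [h1, ← Finset.card_univ, Finset.card_eq_sum_card_fiberwise hmaps,
    Finset.sum_congr rfl h2, Finset.sum_const, smul_eq_mul]

/-- counting classes via Sym -/

noncomputable def mu (x : Fin n → Fin d) : Sym (Fin d) n :=
  ⟨Multiset.map x univ.val, by simp⟩

lemma mu_eq_iff {x y : Fin n → Fin d} : mu x = mu y ↔ nu x = nu y := by
  classical
  have hcount : ∀ (x : Fin n → Fin d) (j : Fin d),
      Multiset.count j (Multiset.map x univ.val) = nu x j := by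
    intro x j
    rw [Multiset.count_map, nu_apply]
    have he : (univ.filter fun i => x i = j) = (univ.filter fun i => j = x i) :=
      Finset.filter_congr fun i _ => eq_comm
    rw [he]
    rfl
  constructor
  · intro h
    ext j
    rw [← hcount x j, ← hcount y j]
    exact congrArg (fun s : Sym (Fin d) n => Multiset.count j s.1) h
  · intro h
    apply Subtype.ext
    apply Multiset.ext.2
    intro j
    show Multiset.count j (Multiset.map x univ.val) = Multiset.count j (Multiset.map y univ.val)
    rw [hcount, hcount, h]

lemma mu_surjective : Function.Surjective (mu : (Fin n → Fin d) → Sym (Fin d) n) := by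
  classical
  rintro ⟨m, hm⟩
  obtain ⟨l, rfl⟩ := Quot.exists_rep m
  have hlen : l.length = n := by simpa using hm
  subst hlen
  refine ⟨fun i => l.get i, Subtype.ext ?_⟩
  show Multiset.map l.get univ.val = _
  have h2 : (univ.val : Multiset (Fin l.length)) = ↑(List.finRange l.length) := rfl
  rw [h2]
  show ((List.map l.get (List.finRange l.length) : List (Fin d)) : Multiset (Fin d)) = _
  rw [← List.ofFn_eq_map, List.ofFn_get]
  rfl

lemma sum_inv_card_classes :
    ∑ z : Fin n → Fin d, (((univ.filter fun w : Fin n → Fin d => nu w = nu z).card : ℂ))⁻¹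
      = ((n + d - 1).choose n : ℂ) := by
  classical
  rw [← Finset.sum_fiberwise_of_maps_to (g := mu)
    (t := (univ : Finset (Sym (Fin d) n))) (fun z _ => mem_univ _)]
  have h1 : ∀ s : Sym (Fin d) n,
      (∑ z ∈ univ.filter fun z : Fin n → Fin d => mu z = s,
        (((univ.filter fun w : Fin n → Fin d => nu w = nu z).card : ℂ))⁻¹) = 1 := by
    intro s
    obtain ⟨z₀, rfl⟩ := mu_surjective s
    have hfib : ∀ z : Fin n → Fin d, mu z = mu z₀ →
        (univ.filter fun w : Fin n → Fin d => nu w = nu z)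
          = (univ.filter fun z : Fin n → Fin d => mu z = mu z₀) := by
      intro z hz
      apply Finset.filter_congr
      intro w _
      simp only [← mu_eq_iff]
      rw [hz]
    rw [Finset.sum_congr rfl (fun z hz => by
      rw [hfib z (by simpa using hz)])]
    rw [Finset.sum_const, nsmul_eq_mul]
    have hne : (((univ.filter fun z : Fin n → Fin d => mu z = mu z₀).card : ℂ)) ≠ 0 := by
      have hmem : z₀ ∈ univ.filter fun z : Fin n → Fin d => mu z = mu z₀ := by simp
      exact Nat.cast_ne_zero.2 (Finset.card_ne_zero_of_mem hmem)
    exact mul_inv_cancel₀ hne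
  rw [Finset.sum_congr rfl (fun s _ => h1 s), Finset.sum_const, nsmul_eq_mul, mul_one]
  rw [Finset.card_univ, Sym.card_sym_eq_multichoose, Nat.multichoose_eq, Fintype.card_fin,
    Nat.add_comm d n]

lemma extract (I : (Fin n → Fin d) → (Fin n → Fin d) → ℂ) (c : ℂ)
    (hvan : ∀ x y, nu x ≠ nu y → I x y = 0)
    (hconst : ∀ x₀ x y, nu x = nu x₀ → nu y = nu x₀ → I x y = I x₀ x₀)
    (hid : ∀ r : Fin d → ℝ,
      ∑ x : Fin n → Fin d, ∑ y : Fin n → Fin d,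
        I x y * ((((∏ i, r (x i)) * ∏ i, r (y i) : ℝ)) : ℂ)
        = c * ((((∑ j, r j ^ 2) ^ n : ℝ)) : ℂ))
    (x₀ : Fin n → Fin d) :
    I x₀ x₀ = c * (((univ.filter fun x : Fin n → Fin d => nu x = nu x₀).card : ℂ))⁻¹ := by
  classical
  set s : Finset (Fin n → Fin d) := univ.filter fun x => nu x = nu x₀ with hs
  set J : ((Fin n → Fin d) × (Fin n → Fin d)) → ℂ :=
    fun p => I p.1 p.2 - (if p.1 = p.2 then c else 0) with hJ
  -- step 1 : the identity in J-form
  have hid' : ∀ r : Fin d → ℝ,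
      ∑ p : (Fin n → Fin d) × (Fin n → Fin d),
        J p * ((((∏ i, r (p.1 i)) * ∏ i, r (p.2 i) : ℝ)) : ℂ) = 0 := by
    intro r
    have e1 : ∑ p : (Fin n → Fin d) × (Fin n → Fin d),
        I p.1 p.2 * ((((∏ i, r (p.1 i)) * ∏ i, r (p.2 i) : ℝ)) : ℂ)
        = c * ((((∑ j, r j ^ 2) ^ n : ℝ)) : ℂ) := by
      rw [Fintype.sum_prod_type]; exact hid r
    have e2 : ∑ p : (Fin n → Fin d) × (Fin n → Fin d),
        (if p.1 = p.2 then c else 0) * ((((∏ i, r (p.1 i)) * ∏ i, r (p.2 i) : ℝ)) : ℂ)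
        = c * ((((∑ j, r j ^ 2) ^ n : ℝ)) : ℂ) := by
      rw [Fintype.sum_prod_type]
      have : ∀ x : Fin n → Fin d, ∑ y : Fin n → Fin d,
          (if x = y then c else 0) * ((((∏ i, r (x i)) * ∏ i, r (y i) : ℝ)) : ℂ)
          = c * ((((∏ i, r (x i) ^ 2) : ℝ)) : ℂ) := by
        intro x
        simp only [ite_mul, zero_mul]
        rw [Finset.sum_ite_eq]
        simp only [mem_univ, if_true]
        congr 1
        exact congrArg _ (by
          rw [← Finset.prod_mul_distrib]
          exact Finset.prod_congr rfl fun i _ => (sq _).symm)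
      rw [Finset.sum_congr rfl (fun x _ => this x), ← Finset.mul_sum]
      congr 1
      rw [← Complex.ofReal_sum]
      congr 1
      rw [Finset.sum_pow' univ (fun j => r j ^ 2) n, Fintype.piFinset_univ]
    simp only [hJ, sub_mul, Finset.sum_sub_distrib, e1, e2, sub_self]
  -- step 2 : real/imaginary polynomial extraction
  have key : ∀ g : ((Fin n → Fin d) × (Fin n → Fin d)) → ℝ,
      (∀ r : Fin d → ℝ, ∑ p : (Fin n → Fin d) × (Fin n → Fin d),
        g p * ((∏ i, r (p.1 i)) * ∏ i, r (p.2 i)) = 0) →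
      (∀ p : (Fin n → Fin d) × (Fin n → Fin d), J p = 0 → g p = 0) →
      ∑ p ∈ s ×ˢ s, g p = 0 := by
    intro g hg hgJ
    set Q : MvPolynomial (Fin d) ℝ :=
      ∑ p : (Fin n → Fin d) × (Fin n → Fin d),
        MvPolynomial.C (g p) * ((∏ i, MvPolynomial.X (p.1 i)) * ∏ i, MvPolynomial.X (p.2 i))
      with hQ
    have hQ0 : Q = 0 := by
      apply MvPolynomial.funext
      intro r
      rw [hQ]
      simp only [map_sum, map_mul, MvPolynomial.eval_C, MvPolynomial.eval_prod,
        MvPolynomial.eval_X, map_zero]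
      exact hg r
    have hcoeff := congrArg (MvPolynomial.coeff (nu x₀ + nu x₀)) hQ0
    rw [hQ, MvPolynomial.coeff_sum] at hcoeff
    simp only [prod_X_eq_monomial, MvPolynomial.monomial_mul, one_mul,
      MvPolynomial.C_mul_monomial, mul_one, MvPolynomial.coeff_monomial,
      MvPolynomial.coeff_zero] at hcoeff
    rw [← Finset.sum_filter] at hcoeff
    rw [← hcoeff]
    apply Finset.sum_subset
    · intro p hp
      simp only [Finset.mem_filter, Finset.mem_univ, true_and]
      simp only [hs, Finset.mem_product, Finset.mem_filter, Finset.mem_univ, true_and] at hp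
      rw [hp.1, hp.2]
    · intro p hp hnp
      simp only [Finset.mem_filter, Finset.mem_univ, true_and] at hp
      simp only [hs, Finset.mem_product, Finset.mem_filter, Finset.mem_univ, true_and] at hnp
      apply hgJ
      have hne : nu p.1 ≠ nu p.2 := by
        intro he
        apply hnp
        constructor
        · ext j
          have := congrArg (fun f : Fin d →₀ ℕ => f j) hp
          simp only [Finsupp.add_apply, he] at this ⊢
          omega
        · ext j
          have := congrArg (fun f : Fin d →₀ ℕ => f j) hp
          simp only [Finsupp.add_apply, he] at this ⊢
          omega
      have hne' : p.1 ≠ p.2 := fun h => hne (by rw [h])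
      simp [hJ, hvan _ _ hne, hne']
  -- step 3: apply to re and im
  have hre : ∑ p ∈ s ×ˢ s, (J p).re = 0 := by
    apply key
    · intro r
      have h0 := congrArg Complex.re (hid' r)
      rw [Complex.re_sum, Complex.zero_re] at h0
      rw [← h0]
      refine Finset.sum_congr rfl fun p _ => ?_
      rw [mul_comm (J p), Complex.re_ofReal_mul, mul_comm]
    · intro p hp; rw [hp]; rfl
  have him : ∑ p ∈ s ×ˢ s, (J p).im = 0 := by
    apply key
    · intro r
      have h0 := congrArg Complex.im (hid' r)
      rw [Complex.im_sum, Complex.zero_im] at h0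
      rw [← h0]
      refine Finset.sum_congr rfl fun p _ => ?_
      rw [mul_comm (J p), Complex.im_ofReal_mul, mul_comm]
    · intro p hp; rw [hp]; rfl
  have hsum : ∑ p ∈ s ×ˢ s, J p = 0 := by
    apply Complex.ext
    · rw [Complex.re_sum]; simpa using hre
    · rw [Complex.im_sum]; simpa using him
  -- step 4: conclude
  rw [Finset.sum_product] at hsum
  have hI : ∀ x ∈ s, ∀ y ∈ s, I x y = I x₀ x₀ := by
    intro x hx y hy
    simp only [hs, Finset.mem_filter] at hx hy
    exact hconst x₀ x y hx.2 hy.2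
  have hsum2 : ∑ x ∈ s, ∑ y ∈ s, J (x, y)
      = (s.card : ℂ) * (s.card : ℂ) * I x₀ x₀ - (s.card : ℂ) * c := by
    have : ∀ x ∈ s, ∑ y ∈ s, J (x, y)
        = (s.card : ℂ) * I x₀ x₀ - (if x ∈ s then c else 0) := by
      intro x hx
      simp only [hJ]
      rw [Finset.sum_sub_distrib]
      congr 1
      · rw [Finset.sum_congr rfl (fun y hy => hI x hx y hy), Finset.sum_const, nsmul_eq_mul]
      · rw [Finset.sum_ite_eq s x (fun _ => c)]
    rw [Finset.sum_congr rfl this, Finset.sum_sub_distrib]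
    congr 1
    · rw [Finset.sum_const, nsmul_eq_mul, mul_assoc]
    · rw [Finset.sum_congr rfl (fun x hx => if_pos hx), Finset.sum_const, nsmul_eq_mul]
  rw [hsum2] at hsum
  have hNne : (s.card : ℂ) ≠ 0 := by
    have hmem : x₀ ∈ s := by simp [hs]
    exact Nat.cast_ne_zero.2 (Finset.card_ne_zero_of_mem hmem)
  have h6 : (s.card : ℂ) * I x₀ x₀ = c := by
    have h7 := sub_eq_zero.1 hsum
    rw [mul_assoc] at h7
    exact mul_left_cancel₀ hNne h7
  rw [← h6]
  field_simp


end SphereAvg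

open SphereAvg


theorem sphere_average_of_product_states
    (n d : ℕ) (hd : 1 ≤ d)
    [MeasurableSpace (EuclideanSpace ℂ (Fin d))]
    [BorelSpace (EuclideanSpace ℂ (Fin d))]
    (ω : Measure (EuclideanSpace ℂ (Fin d))) [IsProbabilityMeasure ω]
    (hsphere : ω {θ : EuclideanSpace ℂ (Fin d) | ‖θ‖ = 1}ᶜ = 0)
    (hinv : ∀ U : EuclideanSpace ℂ (Fin d) ≃ₗᵢ[ℂ] EuclideanSpace ℂ (Fin d),
      Measure.map (⇑U) ω = ω)
    (x y : Fin n → Fin d) :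
    (∫ θ, (∏ i, θ (x i)) * (starRingEnd ℂ) (∏ i, θ (y i)) ∂ω)
      = ((n + d - 1).choose n : ℂ)⁻¹ * (n.factorial : ℂ)⁻¹ *
        (Nat.card {π : Equiv.Perm (Fin n) // ∀ i, x (π i) = y i} : ℂ) := by
  classical
  -- the monomial functions
  set mono : (Fin n → Fin d) → (Fin n → Fin d) → EuclideanSpace ℂ (Fin d) → ℂ :=
    fun x y θ => (∏ i, θ (x i)) * (starRingEnd ℂ) (∏ i, θ (y i)) with hmono
  set I : (Fin n → Fin d) → (Fin n → Fin d) → ℂ :=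
    fun x y => ∫ θ, mono x y θ ∂ω with hIdef
  show I x y = _
  -- almost everywhere on the sphere
  have hae : ∀ᵐ θ ∂ω, ‖θ‖ = 1 := by
    rw [ae_iff]
    convert hsphere using 2
    rfl
  -- coordinates are bounded by the norm
  have hcoord : ∀ (θ : EuclideanSpace ℂ (Fin d)) (j : Fin d), ‖θ j‖ ≤ ‖θ‖ := by
    intro θ j
    rw [EuclideanSpace.norm_eq]
    rw [show ‖θ j‖ = Real.sqrt (‖θ j‖ ^ 2) from (Real.sqrt_sq (norm_nonneg _)).symm]
    apply Real.sqrt_le_sqrt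
    exact Finset.single_le_sum (f := fun i => ‖θ i‖ ^ 2) (fun i _ => sq_nonneg _) (mem_univ j)
  -- continuity
  have hcont : ∀ x y : Fin n → Fin d, Continuous (mono x y) := by
    intro x y
    have hc : ∀ j : Fin d, Continuous (fun θ : EuclideanSpace ℂ (Fin d) => θ j) := fun j => PiLp.continuous_apply 2 _ j
    exact ((continuous_finset_prod _ fun i _ => hc (x i)).mul
      (continuous_star.comp (continuous_finset_prod _ fun i _ => hc (y i))))
  -- integrability
  have hInt : ∀ x y : Fin n → Fin d, Integrable (mono x y) ω := by
    intro x y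
    apply Integrable.mono' (integrable_const (1 : ℝ)) ((hcont x y).aestronglyMeasurable)
    filter_upwards [hae] with θ hθ
    rw [hmono]
    simp only [norm_mul, RingHomIsometric.norm_map]
    calc ‖∏ i, θ (x i)‖ * ‖∏ i, θ (y i)‖ ≤ 1 * 1 := by
          apply mul_le_mul _ _ (norm_nonneg _) zero_le_one
          all_goals {
            rw [norm_prod]
            apply Finset.prod_le_one (fun i _ => norm_nonneg _)
            intro i _
            rw [← hθ]
            exact hcoord θ _ }
      _ = 1 := one_mul 1
  -- change of variables
  have hmap : ∀ (f : EuclideanSpace ℂ (Fin d) → ℂ), Continuous f →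
      ∀ U : EuclideanSpace ℂ (Fin d) ≃ₗᵢ[ℂ] EuclideanSpace ℂ (Fin d), ∫ θ, f (U θ) ∂ω = ∫ θ, f θ ∂ω := by
    intro f hf U
    conv_rhs => rw [← hinv U]
    rw [integral_map U.continuous.measurable.aemeasurable hf.aestronglyMeasurable]
  -- phase transformations
  have hphaseU : ∀ (c : Fin d → ℂ), (∀ j, ‖c j‖ = 1) →
      ∃ U : EuclideanSpace ℂ (Fin d) ≃ₗᵢ[ℂ] EuclideanSpace ℂ (Fin d), ∀ (θ : EuclideanSpace ℂ (Fin d)) (j : Fin d), U θ j = c j * θ j := by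
    intro c hc
    have hne : ∀ j, c j ≠ 0 := by
      intro j h
      have := hc j
      rw [h] at this
      simp at this
    refine ⟨LinearIsometryEquiv.piLpCongrRight 2 (fun j =>
      ⟨LinearEquiv.smulOfNeZero ℂ ℂ (c j) (hne j), fun z => by
        simp [norm_smul, hc j]⟩), fun θ j => ?_⟩
    rw [LinearIsometryEquiv.piLpCongrRight_apply]
    rfl
  -- vanishing of off-type moments
  have hvan : ∀ x y : Fin n → Fin d, nu x ≠ nu y → I x y = 0 := by
    intro x y hne
    obtain ⟨j, hj⟩ : ∃ j, nu x j ≠ nu y j := by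
      by_contra h
      push_neg at h
      exact hne (Finsupp.ext h)
    set k : ℤ := (nu x j : ℤ) - (nu y j : ℤ) with hk
    have hk0 : (k : ℂ) ≠ 0 := by
      simp only [ne_eq, Int.cast_eq_zero, hk]
      omega
    set u : ℂ := Complex.exp ((Real.pi / k : ℝ) * Complex.I) with hu
    have hu1 : ‖u‖ = 1 := by
      rw [hu, Complex.norm_exp_ofReal_mul_I]
    obtain ⟨U, hU⟩ := hphaseU (fun m => if m = j then u else 1)
      (fun m => by by_cases h : m = j <;> simp [h, hu1])
    have hprodfac : ∀ (z : Fin n → Fin d) (θ : EuclideanSpace ℂ (Fin d)),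
        ∏ i, U θ (z i) = u ^ (nu z j) * ∏ i, θ (z i) := by
      intro z θ
      rw [Finset.prod_congr rfl (fun i _ => hU θ (z i)), Finset.prod_mul_distrib]
      congr 1
      rw [← Finset.prod_filter_mul_prod_filter_not univ (fun i => z i = j)]
      rw [Finset.prod_congr rfl (fun i hi => if_pos (Finset.mem_filter.1 hi).2),
        Finset.prod_congr rfl (fun i hi => if_neg (Finset.mem_filter.1 hi).2)]
      rw [Finset.prod_const, Finset.prod_const, one_pow, mul_one, nu_apply]
    have h1 : ∀ θ : EuclideanSpace ℂ (Fin d), mono x y (U θ)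
        = (u ^ (nu x j) * (starRingEnd ℂ) u ^ (nu y j)) * mono x y θ := by
      intro θ
      rw [hmono]
      simp only []
      rw [hprodfac x θ, hprodfac y θ, map_mul, map_pow]
      ring
    have h2 : I x y = (u ^ (nu x j) * (starRingEnd ℂ) u ^ (nu y j)) * I x y := by
      conv_lhs => rw [hIdef]
      simp only []
      rw [← hmap (mono x y) (hcont x y) U]
      rw [show (fun θ => mono x y (U θ)) = fun θ =>
        (u ^ (nu x j) * (starRingEnd ℂ) u ^ (nu y j)) * mono x y θ from funext h1]
      rw [integral_const_mul]
    have hA : u ^ (nu x j) * (starRingEnd ℂ) u ^ (nu y j) = -1 := by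
      rw [hu, ← Complex.exp_conj]
      rw [show (starRingEnd ℂ) ((Real.pi / k : ℝ) * Complex.I)
          = -((Real.pi / k : ℝ) * Complex.I) by
        rw [map_mul, Complex.conj_ofReal, Complex.conj_I]; ring]
      rw [← Complex.exp_nat_mul, ← Complex.exp_nat_mul, ← Complex.exp_add]
      rw [show ((nu x j : ℂ) * ((Real.pi / k : ℝ) * Complex.I)
          + (nu y j : ℂ) * -((Real.pi / k : ℝ) * Complex.I))
          = ((nu x j : ℂ) - (nu y j : ℂ)) * ((Real.pi / k : ℝ) * Complex.I) by ring]
      rw [show ((nu x j : ℂ) - (nu y j : ℂ)) = (k : ℂ) by rw [hk]; push_cast; ring]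
      rw [show ((k : ℂ) * ((Real.pi / k : ℝ) * Complex.I)) = Real.pi * Complex.I by
        push_cast
        field_simp]
      exact Complex.exp_pi_mul_I
    rw [hA] at h2
    linear_combination (1/2 : ℂ) * h2
  -- invariance of moments within a type class
  have hconst : ∀ x₀ x y : Fin n → Fin d, nu x = nu x₀ → nu y = nu x₀ → I x y = I x₀ x₀ := by
    intro x₀ x y hx hy
    rw [hIdef]
    simp only []
    congr 1
    funext θ
    rw [hmono]
    simp only []
    rw [← prod_eq_of_nu_eq hx (fun j => θ j), ← prod_eq_of_nu_eq hy (fun j => θ j)]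
  -- base point
  set j0 : Fin d := ⟨0, hd⟩ with hj0
  set x0 : Fin n → Fin d := fun _ => j0 with hx0
  set e0 : EuclideanSpace ℂ (Fin d) := EuclideanSpace.single j0 1 with he0
  set ψr : (Fin d → ℝ) → EuclideanSpace ℂ (Fin d) := fun r => WithLp.toLp 2 (fun j => (r j : ℂ)) with hψrdef
  -- transitivity of the unitary group on the sphere
  have htrans : ∀ ψ : EuclideanSpace ℂ (Fin d), ‖ψ‖ = 1 →
      ∃ U : EuclideanSpace ℂ (Fin d) ≃ₗᵢ[ℂ] EuclideanSpace ℂ (Fin d), U e0 = ψ := by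
    intro ψ hψ
    have hfr : Module.finrank ℂ (EuclideanSpace ℂ (Fin d)) = Fintype.card (Fin d) := by
      rw [finrank_euclideanSpace]
    have horth : Orthonormal ℂ (Set.restrict {j0} (fun _ : Fin d => ψ)) := by
      rw [orthonormal_iff_ite]
      intro i j
      have hij : i = j := Subsingleton.elim i j
      subst hij
      rw [if_pos rfl]
      rw [inner_self_eq_norm_sq_to_K, show ({j0} : Set (Fin d)).restrict (fun _ => ψ) i = ψ from rfl, hψ]
      norm_num
    obtain ⟨b, hb⟩ := Orthonormal.exists_orthonormalBasis_extension_of_card_eq hfr horth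
    refine ⟨b.repr.symm, ?_⟩
    rw [he0, OrthonormalBasis.repr_symm_single]
    exact hb j0 rfl
  -- the integral of |<psi,theta>|^{2n} is constant over the sphere
  have hH : ∀ ψ : EuclideanSpace ℂ (Fin d), ‖ψ‖ = 1 →
      ∫ θ, (inner ℂ ψ θ : ℂ) ^ n * (starRingEnd ℂ) ((inner ℂ ψ θ : ℂ)) ^ n ∂ω = I x0 x0 := by
    intro ψ hψ
    obtain ⟨U, hU⟩ := htrans ψ hψ
    have h1 : Continuous fun θ : EuclideanSpace ℂ (Fin d) => (inner ℂ ψ θ : ℂ) :=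
      Continuous.inner continuous_const continuous_id
    have hcontf : Continuous fun θ : EuclideanSpace ℂ (Fin d) =>
        (inner ℂ ψ θ : ℂ) ^ n * (starRingEnd ℂ) ((inner ℂ ψ θ : ℂ)) ^ n :=
      (h1.pow n).mul ((continuous_star.comp h1).pow n)
    rw [← hmap _ hcontf U]
    have hpt2 : (fun θ => (inner ℂ ψ (U θ) : ℂ)^n * (starRingEnd ℂ) ((inner ℂ ψ (U θ) : ℂ))^n)
        = mono x0 x0 := by
      funext θ
      have hpt : (inner ℂ ψ (U θ) : ℂ) = inner ℂ e0 θ := by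
        rw [← hU, LinearIsometryEquiv.inner_map_map]
      rw [hpt]
      have hinner : (inner ℂ e0 θ : ℂ) = θ j0 := by
        rw [he0, EuclideanSpace.inner_single_left]
        simp
      rw [hinner, hmono]
      simp only []
      rw [show (fun i : Fin n => θ (x0 i)) = fun _ => θ j0 from rfl]
      rw [Finset.prod_const, Finset.card_univ, Fintype.card_fin, map_pow]
    rw [hpt2]
  -- expansion of the 2n-th power of the inner product with a real vector
  have hptexp : ∀ (r : Fin d → ℝ) (θ : EuclideanSpace ℂ (Fin d)),
      (inner ℂ (ψr r) θ : ℂ)^n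
          * (starRingEnd ℂ) ((inner ℂ (ψr r) θ : ℂ))^n
      = ∑ a : Fin n → Fin d, ∑ b : Fin n → Fin d,
          (((∏ i, r (a i)) * ∏ i, r (b i) : ℝ) : ℂ) * mono a b θ := by
    intro r θ
    have hin : (inner ℂ (ψr r) θ : ℂ)
        = ∑ j, (r j : ℂ) * θ j := by
      rw [PiLp.inner_apply]
      refine Finset.sum_congr rfl fun j _ => ?_
      rw [RCLike.inner_apply]
      rw [show ψr r j = ((r j : ℝ) : ℂ) from rfl, Complex.conj_ofReal, mul_comm]
    have hstar : (starRingEnd ℂ) (inner ℂ (ψr r) θ : ℂ)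
        = ∑ j, (r j : ℂ) * (starRingEnd ℂ) (θ j) := by
      rw [hin, map_sum]
      refine Finset.sum_congr rfl fun j _ => ?_
      rw [map_mul, Complex.conj_ofReal]
    rw [hstar, hin, Finset.sum_pow' univ _ n, Finset.sum_pow' univ _ n, Fintype.piFinset_univ,
      Finset.sum_mul_sum]
    refine Finset.sum_congr rfl fun a _ => Finset.sum_congr rfl fun b _ => ?_
    rw [Finset.prod_mul_distrib, Finset.prod_mul_distrib, hmono]
    simp only []
    rw [show ∏ i, (starRingEnd ℂ) (θ (b i)) = (starRingEnd ℂ) (∏ i, θ (b i)) from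
      (map_prod (starRingEnd ℂ) _ _).symm]
    push_cast
    ring
  -- the sphere identity
  have hidu : ∀ r : Fin d → ℝ, (∑ j, r j ^ 2) = 1 →
      ∑ a : Fin n → Fin d, ∑ b : Fin n → Fin d,
        I a b * (((∏ i, r (a i)) * ∏ i, r (b i) : ℝ) : ℂ) = I x0 x0 := by
    intro r hr
    have hψnorm : ‖(ψr r)‖ = 1 := by
      rw [EuclideanSpace.norm_eq]
      rw [show ∑ j, ‖(ψr r) j‖^2 = ∑ j, r j ^2 from
        Finset.sum_congr rfl fun j _ => by
          rw [show (ψr r) j = ((r j : ℝ) : ℂ) from rfl]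
          rw [Complex.norm_real, Real.norm_eq_abs, sq_abs]]
      rw [hr, Real.sqrt_one]
    have h0 := hH _ hψnorm
    rw [show (fun θ => (inner ℂ (ψr r) θ : ℂ)^n
        * (starRingEnd ℂ) ((inner ℂ (ψr r) θ : ℂ))^n)
        = fun θ => ∑ a : Fin n → Fin d, ∑ b : Fin n → Fin d,
          (((∏ i, r (a i)) * ∏ i, r (b i) : ℝ) : ℂ) * mono a b θ from funext (hptexp r)] at h0
    rw [integral_finset_sum univ (fun a _ => integrable_finset_sum univ
      (fun b _ => (hInt a b).const_mul _))] at h0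
    rw [Finset.sum_congr rfl (fun a _ => integral_finset_sum univ
      (fun b _ => (hInt a b).const_mul _))] at h0
    rw [Finset.sum_congr rfl (fun a _ => Finset.sum_congr rfl
      (fun b _ => integral_const_mul _ _))] at h0
    rw [← h0]
    exact Finset.sum_congr rfl fun a _ => Finset.sum_congr rfl fun b _ => mul_comm _ _
  -- homogenization
  have hid : ∀ r : Fin d → ℝ,
      ∑ a : Fin n → Fin d, ∑ b : Fin n → Fin d,
        I a b * (((∏ i, r (a i)) * ∏ i, r (b i) : ℝ) : ℂ)
      = I x0 x0 * (((∑ j, r j ^ 2) ^ n : ℝ) : ℂ) := by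
    intro r
    rcases eq_or_lt_of_le (show (0:ℝ) ≤ ∑ j, r j ^2 from
      Finset.sum_nonneg fun j _ => sq_nonneg _) with hs | hs
    · -- the sum of squares is zero, so r = 0
      have hr0 : ∀ j, r j = 0 := by
        intro j
        have h1 := (Finset.sum_eq_zero_iff_of_nonneg (fun j _ => sq_nonneg (r j))).1 hs.symm
          j (mem_univ j)
        exact pow_eq_zero_iff two_ne_zero |>.1 h1
      rcases Nat.eq_zero_or_pos n with hn | hn
      · subst hn
        have hq : ∀ a b : Fin 0 → Fin d, I a b * (((∏ i, r (a i)) * ∏ i, r (b i) : ℝ) : ℂ)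
            = I x0 x0 := by
          intro a b
          rw [Subsingleton.elim a x0, Subsingleton.elim b x0]
          simp
        rw [Finset.sum_congr rfl fun a _ => Finset.sum_congr rfl fun b _ => hq a b]
        simp [Finset.card_univ]
      · have hz : ∀ a : Fin n → Fin d, (∏ i, r (a i)) = 0 := fun a => by
          rw [Finset.prod_congr rfl fun i _ => hr0 (a i), Finset.prod_const,
            Finset.card_univ, Fintype.card_fin, zero_pow (by omega : n ≠ 0)]
        rw [Finset.sum_congr rfl fun a _ => Finset.sum_congr rfl fun b _ => by
          rw [hz a, zero_mul, Complex.ofReal_zero, mul_zero]]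
        rw [← hs, zero_pow (by omega : n ≠ 0)]
        simp
    · -- positive case: rescale
      set t : ℝ := Real.sqrt (∑ j, r j ^ 2) with ht
      have ht0 : 0 < t := Real.sqrt_pos.2 hs
      set u : Fin d → ℝ := fun j => r j / t with hudef
      have hu1 : (∑ j, u j ^ 2) = 1 := by
        have h7 : ∀ j : Fin d, u j ^ 2 = r j ^ 2 / (∑ j, r j ^ 2) := by
          intro j
          rw [hudef]
          simp only []
          rw [div_pow, ht, Real.sq_sqrt hs.le]
        rw [Finset.sum_congr rfl fun j _ => h7 j, ← Finset.sum_div]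
        exact div_self (ne_of_gt hs)
      have hE := hidu u hu1
      have hsub : ∀ a : Fin n → Fin d, ∏ i, r (a i) = t ^ n * ∏ i, u (a i) := by
        intro a
        rw [Finset.prod_congr rfl (fun i _ => show r (a i) = t * u (a i) by
          rw [hudef]
          simp only []
          field_simp)]
        rw [Finset.prod_mul_distrib, Finset.prod_const, Finset.card_univ, Fintype.card_fin]
      have hTT : ((t ^ n : ℝ) : ℂ) * ((t ^ n : ℝ) : ℂ) = (((∑ j, r j ^ 2) ^ n : ℝ) : ℂ) := by
        rw [← Complex.ofReal_mul]
        congr 1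
        rw [← mul_pow, Real.mul_self_sqrt hs.le]
      calc ∑ a : Fin n → Fin d, ∑ b : Fin n → Fin d,
            I a b * (((∏ i, r (a i)) * ∏ i, r (b i) : ℝ) : ℂ)
          = ∑ a : Fin n → Fin d, ∑ b : Fin n → Fin d,
              (((t ^ n : ℝ) : ℂ) * ((t ^ n : ℝ) : ℂ))
                * (I a b * (((∏ i, u (a i)) * ∏ i, u (b i) : ℝ) : ℂ)) := by
            refine Finset.sum_congr rfl fun a _ => Finset.sum_congr rfl fun b _ => ?_
            rw [hsub a, hsub b]
            push_cast
            ring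
        _ = (((t ^ n : ℝ) : ℂ) * ((t ^ n : ℝ) : ℂ))
              * ∑ a : Fin n → Fin d, ∑ b : Fin n → Fin d,
                  I a b * (((∏ i, u (a i)) * ∏ i, u (b i) : ℝ) : ℂ) := by
            rw [Finset.mul_sum]
            refine Finset.sum_congr rfl fun a _ => ?_
            rw [Finset.mul_sum]
        _ = I x0 x0 * (((∑ j, r j ^ 2) ^ n : ℝ) : ℂ) := by
            rw [hE, hTT]
            ring
  -- extraction of the moments
  have hmom : ∀ x₀ : Fin n → Fin d, I x₀ x₀ = I x0 x0 *
      (((univ.filter fun w : Fin n → Fin d => nu w = nu x₀).card : ℂ))⁻¹ :=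
    fun x₀ => extract I (I x0 x0) hvan hconst hid x₀
  -- normalization
  have hnorm : ∑ z : Fin n → Fin d, I z z = 1 := by
    have hpt : ∀ᵐ θ ∂ω, ∑ z : Fin n → Fin d, mono z z θ = 1 := by
      filter_upwards [hae] with θ hθ
      have h1 : ∑ z : Fin n → Fin d, mono z z θ
          = (∑ j, θ j * (starRingEnd ℂ) (θ j)) ^ n := by
        rw [Finset.sum_pow' univ _ n, Fintype.piFinset_univ]
        refine Finset.sum_congr rfl fun z _ => ?_
        rw [hmono]
        simp only []
        rw [show (starRingEnd ℂ) (∏ i, θ (z i)) = ∏ i, (starRingEnd ℂ) (θ (z i)) from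
          map_prod (starRingEnd ℂ) _ _, ← Finset.prod_mul_distrib]
      rw [h1]
      have h2 : ∑ j, θ j * (starRingEnd ℂ) (θ j) = ((1:ℝ) : ℂ) := by
        rw [Finset.sum_congr rfl fun j _ => Complex.mul_conj (θ j), ← Complex.ofReal_sum]
        congr 1
        have h3 : ∑ j, Complex.normSq (θ j) = ∑ j, ‖θ j‖ ^ 2 :=
          Finset.sum_congr rfl fun j _ => by
            rw [Complex.normSq_eq_norm_sq]
        rw [h3]
        have h4 := EuclideanSpace.norm_eq θ
        rw [hθ] at h4
        exact Real.sqrt_eq_one.1 h4.symm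
      rw [h2]
      norm_num
    calc ∑ z : Fin n → Fin d, I z z
        = ∫ θ, ∑ z : Fin n → Fin d, mono z z θ ∂ω :=
          (integral_finset_sum univ (fun z _ => hInt z z)).symm
      _ = ∫ _θ, (1:ℂ) ∂ω := integral_congr_ae hpt
      _ = 1 := by simp
  -- the value of the constant
  have hKne : (((n + d - 1).choose n : ℕ) : ℂ) ≠ 0 :=
    Nat.cast_ne_zero.2 (Nat.pos_iff_ne_zero.1 (Nat.choose_pos (by omega)))
  have hc : I x0 x0 = (((n + d - 1).choose n : ℕ) : ℂ)⁻¹ := by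
    have h6 : ∑ z : Fin n → Fin d, I z z = I x0 x0 *
        ∑ z : Fin n → Fin d,
          (((univ.filter fun w : Fin n → Fin d => nu w = nu z).card : ℂ))⁻¹ := by
      rw [Finset.mul_sum]
      exact Finset.sum_congr rfl fun z _ => hmom z
    rw [hnorm, sum_inv_card_classes] at h6
    exact eq_inv_of_mul_eq_one_left h6.symm
  -- conclusion
  by_cases hxy : nu x = nu y
  · have hIxy : I x y = I x x := hconst x x y rfl hxy.symm
    rw [hIxy, hmom x, hc]
    have hcard : Nat.card {π : Equiv.Perm (Fin n) // ∀ i, x (π i) = y i}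
        = (univ.filter fun π : Equiv.Perm (Fin n) => ∀ i, x (π i) = y i).card := by
      rw [Nat.card_eq_fintype_card, Fintype.card_subtype]
    obtain ⟨π₀, hπ₀⟩ := exists_perm_iff.2 hxy
    have hcard2 := card_filter_perm_eq x y π₀ hπ₀
    rw [hcard, hcard2]
    have hNne : ((univ.filter fun w : Fin n → Fin d => nu w = nu x).card : ℂ) ≠ 0 :=
      Nat.cast_ne_zero.2 (Finset.card_ne_zero_of_mem
        (Finset.mem_filter.2 ⟨Finset.mem_univ x, rfl⟩))
    have hPne : ((univ.filter fun π : Equiv.Perm (Fin n) => ∀ i, x (π i) = x i).card : ℂ) ≠ 0 :=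
      Nat.cast_ne_zero.2 (Finset.card_ne_zero_of_mem
        (Finset.mem_filter.2 ⟨Finset.mem_univ 1, fun i => rfl⟩))
    have hosC : ((univ.filter fun w : Fin n → Fin d => nu w = nu x).card : ℂ)
        * ((univ.filter fun π : Equiv.Perm (Fin n) => ∀ i, x (π i) = x i).card : ℂ)
        = (n.factorial : ℂ) := by
      rw [← Nat.cast_mul, orbit_stab x]
    rw [show (n.factorial : ℂ) = _ * _ from hosC.symm]
    field_simp
  · rw [hvan x y hxy]
    have hempty : IsEmpty {π : Equiv.Perm (Fin n) // ∀ i, x (π i) = y i} :=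
      ⟨fun p => hxy (exists_perm_iff.1 ⟨p.1, p.2⟩)⟩
    rw [Nat.card_of_isEmpty]
    simp
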